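/- The following properties of arsinh hold: (i) for every t > 0, the quantity Δ(t) := arsinh(t/2) − log(t) is nonnegative, the function t ↦ Δ(t) is decreasing on (0,∞), and Δ(t) ≤ 1/t² as well as exp(Δ(t)) ≤ 1 + 1/t²; (ii) for all s, t ∈ ℝ\{0} with sign(t) = sign(s), one has |arsinh(t) − arsinh(s)| ≤ |log(t/s)|; (iii) the map ℝ → ℝ, t ↦ t·arsinh(t), is convex. -/

import Mathlib

open Real

/-- Key lemma: for `0 < s ≤ t`, `arsinh t - arsinh s ≤ log t - log s`. -/
lemma arsinh_sub_le_log_sub {s t : ℝ} (hs : 0 < s) (hst : s ≤ t) :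
    Real.arsinh t - Real.arsinh s ≤ Real.log t - Real.log s := by
  have ht : 0 < t := hs.trans_le hst
  have hsq_s : (0:ℝ) < s + √(1 + s ^ 2) := by
    have : (0:ℝ) ≤ √(1 + s ^ 2) := Real.sqrt_nonneg _
    linarith
  have hsq_t : (0:ℝ) < t + √(1 + t ^ 2) := by
    have : (0:ℝ) ≤ √(1 + t ^ 2) := Real.sqrt_nonneg _
    linarith
  rw [Real.arsinh, Real.arsinh, sub_le_sub_iff]
  rw [← Real.log_mul (ne_of_gt hsq_t) (ne_of_gt hs),
    ← Real.log_mul (ne_of_gt ht) (ne_of_gt hsq_s)]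
  apply Real.log_le_log (by positivity)
  have key : s * √(1 + t ^ 2) ≤ t * √(1 + s ^ 2) := by
    have h1 : s * √(1 + t ^ 2) = √(s ^ 2 * (1 + t ^ 2)) := by
      rw [Real.sqrt_mul (sq_nonneg s), Real.sqrt_sq hs.le]
    have h2 : t * √(1 + s ^ 2) = √(t ^ 2 * (1 + s ^ 2)) := by
      rw [Real.sqrt_mul (sq_nonneg t), Real.sqrt_sq ht.le]
    rw [h1, h2]
    apply Real.sqrt_le_sqrt
    nlinarith
  nlinarith

lemma abs_arsinh_sub_le {s t : ℝ} (hs : 0 < s) (ht : 0 < t) :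
    |Real.arsinh t - Real.arsinh s| ≤ |Real.log t - Real.log s| := by
  rcases le_total s t with h | h
  · rw [abs_of_nonneg (by simpa [sub_nonneg, Real.arsinh_le_arsinh] using h),
      abs_of_nonneg (by simpa [sub_nonneg] using Real.log_le_log hs h)]
    exact arsinh_sub_le_log_sub hs h
  · rw [abs_of_nonpos (by simpa [sub_nonpos, Real.arsinh_le_arsinh] using h),
      abs_of_nonpos (by simpa [sub_nonpos] using Real.log_le_log ht h)]
    have := arsinh_sub_le_log_sub ht h
    linarith

lemma exp_delta_le (t : ℝ) (ht : 0 < t) :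
    Real.exp (Real.arsinh (t / 2) - Real.log t) ≤ 1 + 1 / t ^ 2 := by
  rw [Real.exp_sub, Real.exp_log ht, Real.exp_arsinh]
  rw [div_le_iff₀ ht]
  have key : √(1 + (t / 2) ^ 2) ≤ t / 2 + 1 / t := by
    have h1 : (1 + (t / 2) ^ 2) ≤ (t / 2 + 1 / t) ^ 2 := by
      have e : t * (1 / t) = 1 := by field_simp
      nlinarith [sq_nonneg (1 / t)]
    calc √(1 + (t / 2) ^ 2) ≤ √((t / 2 + 1 / t) ^ 2) := Real.sqrt_le_sqrt h1
      _ = t / 2 + 1 / t := Real.sqrt_sq (by positivity)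
  have h2 : (1 + 1 / t ^ 2) * t = t + 1 / t := by field_simp
  rw [h2]
  linarith

/-- basic properties of arsinh.  Here `Δ(t) = arsinh(t/2) − log t`. -/
theorem arsinh_basic_properties :
    (∀ t : ℝ, 0 < t → 0 ≤ Real.arsinh (t / 2) - Real.log t) ∧
    AntitoneOn (fun t : ℝ => Real.arsinh (t / 2) - Real.log t) (Set.Ioi 0) ∧
    (∀ t : ℝ, 0 < t → Real.arsinh (t / 2) - Real.log t ≤ 1 / t ^ 2) ∧
    (∀ t : ℝ, 0 < t → Real.exp (Real.arsinh (t / 2) - Real.log t) ≤ 1 + 1 / t ^ 2) ∧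
    (∀ s t : ℝ, s ≠ 0 → t ≠ 0 → Real.sign t = Real.sign s →
      |Real.arsinh t - Real.arsinh s| ≤ |Real.log (t / s)|) ∧
    ConvexOn ℝ Set.univ (fun t : ℝ => t * Real.arsinh t) := by
  refine ⟨?_, ?_, ?_, ?_, ?_, ?_⟩
  · -- nonnegativity
    intro t ht
    rw [sub_nonneg, Real.arsinh]
    apply Real.log_le_log ht
    have h1 : (t / 2) ≤ √(1 + (t / 2) ^ 2) := by
      rcases le_or_gt (t / 2) 0 with h | h
      · exact h.trans (Real.sqrt_nonneg _)
      · calc t / 2 = √((t / 2) ^ 2) := (Real.sqrt_sq h.le).symm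
          _ ≤ √(1 + (t / 2) ^ 2) := Real.sqrt_le_sqrt (by nlinarith)
    linarith
  · -- antitone
    intro a ha b hb hab
    simp only [Set.mem_Ioi] at ha hb
    have ha2 : 0 < a / 2 := by linarith
    have := arsinh_sub_le_log_sub ha2 (by linarith : a / 2 ≤ b / 2)
    have hlog : Real.log (b / 2) - Real.log (a / 2) = Real.log b - Real.log a := by
      rw [Real.log_div (by linarith) two_ne_zero, Real.log_div (by linarith) two_ne_zero]
      ring
    simp only
    linarith [hlog ▸ this]
  · -- Δ ≤ 1/t²
    intro t ht
    have h1 := exp_delta_le t ht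
    have h2 : Real.arsinh (t / 2) - Real.log t ≤
        Real.exp (Real.arsinh (t / 2) - Real.log t) - 1 := by
      nlinarith [Real.add_one_le_exp (Real.arsinh (t / 2) - Real.log t)]
    linarith
  · exact exp_delta_le
  · -- Lipschitz-type bound
    intro s t hs ht hsign
    rcases lt_trichotomy s 0 with hsneg | hs0 | hspos
    · rcases lt_trichotomy t 0 with htneg | ht0 | htpos
      · have h := abs_arsinh_sub_le (neg_pos.mpr hsneg) (neg_pos.mpr htneg)
        rw [Real.arsinh_neg, Real.arsinh_neg] at h
        have hlog : Real.log (-t) - Real.log (-s) = Real.log (t / s) := by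
          rw [← Real.log_div (by linarith) (by linarith)]
          congr 1
          field_simp
        rw [hlog] at h
        calc |Real.arsinh t - Real.arsinh s| = |-(Real.arsinh t) - -(Real.arsinh s)| := by
              rw [← abs_neg]; congr 1; ring
          _ ≤ |Real.log (t / s)| := h
      · exact absurd ht0 ht
      · exfalso
        rw [Real.sign_of_pos htpos, Real.sign_of_neg hsneg] at hsign
        norm_num at hsign
    · exact absurd hs0 hs
    · rcases lt_trichotomy t 0 with htneg | ht0 | htpos
      · exfalso
        rw [Real.sign_of_neg htneg, Real.sign_of_pos hspos] at hsign
        norm_num at hsign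
      · exact absurd ht0 ht
      · have h := abs_arsinh_sub_le hspos htpos
        rwa [← Real.log_div (ne_of_gt htpos) (ne_of_gt hspos)] at h
  · -- convexity
    have hd : ∀ x : ℝ, HasDerivAt (fun t : ℝ => t * Real.arsinh t)
        (Real.arsinh x + x * (√(1 + x ^ 2))⁻¹) x := by
      intro x
      have := (hasDerivAt_id x).mul (Real.hasDerivAt_arsinh x)
      simpa [one_mul, add_comm, Pi.mul_def] using this
    have hdiff : Differentiable ℝ (fun t : ℝ => t * Real.arsinh t) :=
      fun x => (hd x).differentiableAt
    apply Monotone.convexOn_univ_of_deriv hdiff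
    have hderiv : deriv (fun t : ℝ => t * Real.arsinh t) =
        fun x => Real.arsinh x + x * (√(1 + x ^ 2))⁻¹ :=
      funext fun x => (hd x).deriv
    rw [hderiv]
    intro a b hab
    have h1 : Real.arsinh a ≤ Real.arsinh b := Real.arsinh_le_arsinh.mpr hab
    have h2 : a * (√(1 + a ^ 2))⁻¹ ≤ b * (√(1 + b ^ 2))⁻¹ := by
      have hsa : (0:ℝ) < √(1 + a ^ 2) := Real.sqrt_pos.mpr (by positivity)
      have hsb : (0:ℝ) < √(1 + b ^ 2) := Real.sqrt_pos.mpr (by positivity)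
      have hsa2 : √(1 + a ^ 2) ^ 2 = 1 + a ^ 2 := Real.sq_sqrt (by positivity)
      have hsb2 : √(1 + b ^ 2) ^ 2 = 1 + b ^ 2 := Real.sq_sqrt (by positivity)
      rw [← div_eq_mul_inv, ← div_eq_mul_inv, div_le_div_iff₀ hsa hsb]
      rcases le_or_gt a 0 with ha0 | ha0
      · rcases le_or_gt b 0 with hb0 | hb0
        · -- both nonpositive
          have e1 : (-b) * √(1 + a ^ 2) = √(b ^ 2 * (1 + a ^ 2)) := by
            rw [Real.sqrt_mul (sq_nonneg b), Real.sqrt_sq_eq_abs, abs_of_nonpos hb0]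
          have e2 : (-a) * √(1 + b ^ 2) = √(a ^ 2 * (1 + b ^ 2)) := by
            rw [Real.sqrt_mul (sq_nonneg a), Real.sqrt_sq_eq_abs, abs_of_nonpos ha0]
          have h3 : √(b ^ 2 * (1 + a ^ 2)) ≤ √(a ^ 2 * (1 + b ^ 2)) :=
            Real.sqrt_le_sqrt (by nlinarith)
          rw [← e1, ← e2] at h3
          linarith
        · -- a ≤ 0 < b
          have : a * √(1 + b ^ 2) ≤ 0 := mul_nonpos_of_nonpos_of_nonneg ha0 hsb.le
          have : 0 ≤ b * √(1 + a ^ 2) := mul_nonneg hb0.le hsa.le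
          linarith
      · -- both positive
        have hb0 : 0 < b := lt_of_lt_of_le ha0 hab
        have e1 : a * √(1 + b ^ 2) = √(a ^ 2 * (1 + b ^ 2)) := by
          rw [Real.sqrt_mul (sq_nonneg a), Real.sqrt_sq_eq_abs, abs_of_pos ha0]
        have e2 : b * √(1 + a ^ 2) = √(b ^ 2 * (1 + a ^ 2)) := by
          rw [Real.sqrt_mul (sq_nonneg b), Real.sqrt_sq_eq_abs, abs_of_pos hb0]
        rw [e1, e2]
        exact Real.sqrt_le_sqrt (by nlinarith)
    linarith
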